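/- Let A be a packing bound function, let 1 ≤ n ≤ d, and let C ⊆ ℝ^d be a bounded Borel set whose upper n-dimensional Minkowski content is finite. Then limsup_{r → ∞} A(rC)/r^n < ∞. -/

import Mathlib

open scoped Pointwise
open MeasureTheory Bornology Filter
open scoped ENNReal

/-- A packing bound function: an assignment of a nonnegative real number to every bounded
Borel subset of every Euclidean space, satisfying the sphere bound, Lipschitz, union,
and mesh axioms. -/
structure PackingBoundFunction where
  toFun : ∀ d : ℕ, Set (EuclideanSpace ℝ (Fin d)) → ℝ
  nonneg : ∀ (d : ℕ) (C : Set (EuclideanSpace ℝ (Fin d))),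
    IsBounded C → MeasurableSet C → 0 ≤ toFun d C
  sphere_bound : ∀ (d : ℕ) (C : Set (EuclideanSpace ℝ (Fin d))),
    IsBounded C → MeasurableSet C → C.Nonempty →
    (∃ z, C ⊆ Metric.ball z 1) → toFun d C = 1
  lipschitz : ∀ (d d' : ℕ) (C : Set (EuclideanSpace ℝ (Fin d)))
    (C' : Set (EuclideanSpace ℝ (Fin d'))),
    IsBounded C → MeasurableSet C → IsBounded C' → MeasurableSet C' →
    (∃ ψ : EuclideanSpace ℝ (Fin d) → EuclideanSpace ℝ (Fin d'),
      (∀ x ∈ C, ψ x ∈ C') ∧ ∀ x ∈ C, ∀ y ∈ C, dist x y ≤ dist (ψ x) (ψ y)) →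
    toFun d C ≤ toFun d' C'
  union : ∀ (d : ℕ) (C C' : Set (EuclideanSpace ℝ (Fin d))),
    IsBounded C → MeasurableSet C → IsBounded C' → MeasurableSet C' →
    (∀ x ∈ C, ∀ x' ∈ C', 2 ≤ dist x x') →
    toFun d (C ∪ C') = toFun d C + toFun d C'
  mesh : ∀ (ε : ℝ), 0 < ε → ∀ (d : ℕ) (C C' : Set (EuclideanSpace ℝ (Fin d))),
    IsBounded C → MeasurableSet C → IsBounded C' → MeasurableSet C' →
    C ⊆ Metric.thickening ε C' →
    toFun d ((1 / (1 + ε)) • C) ≤ toFun d C'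

/-- The value of a packing bound function on a finite `2`-separated set is its cardinality. -/
lemma PackingBoundFunction.sep_eval (A : PackingBoundFunction) (d : ℕ)
    (S : Finset (EuclideanSpace ℝ (Fin d)))
    (hsep : ∀ x ∈ S, ∀ y ∈ S, x ≠ y → (2:ℝ) ≤ dist x y) :
    A.toFun d ↑S = S.card := by
  classical
  induction S using Finset.induction_on with
  | empty =>
      have h := A.union d ∅ ∅ (Set.finite_empty.isBounded) MeasurableSet.empty
        (Set.finite_empty.isBounded) MeasurableSet.empty (by simp)
      simp only [Set.union_empty] at h
      simpa using by linarith [h]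
  | @insert a S ha ih =>
      have hsep' : ∀ x ∈ S, ∀ y ∈ S, x ≠ y → (2:ℝ) ≤ dist x y := by
        intro x hx y hy hxy
        exact hsep x (Finset.mem_insert_of_mem hx) y (Finset.mem_insert_of_mem hy) hxy
      have hcoe : ((insert a S : Finset _) : Set (EuclideanSpace ℝ (Fin d)))
          = {a} ∪ (↑S : Set _) := by
        rw [Finset.coe_insert, Set.insert_eq]
      have hdist : ∀ x ∈ ({a} : Set (EuclideanSpace ℝ (Fin d))), ∀ x' ∈ (↑S : Set _),
          (2:ℝ) ≤ dist x x' := by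
        intro x hx x' hx'
        rcases hx with rfl
        refine hsep x (Finset.mem_insert_self _ _) x' (Finset.mem_insert_of_mem hx') ?_
        rintro rfl; exact ha hx'
      have hu := A.union d {a} ↑S (Set.finite_singleton a).isBounded
        (measurableSet_singleton a) (S.finite_toSet.isBounded) (S.finite_toSet.measurableSet)
        hdist
      have h1 : A.toFun d {a} = 1 := by
        refine A.sphere_bound d {a} (Set.finite_singleton a).isBounded
          (measurableSet_singleton a) ⟨a, rfl⟩ ⟨a, ?_⟩
        simp [Metric.mem_ball_self]
      rw [hcoe, hu, h1, ih hsep', Finset.card_insert_of_notMem ha]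
      push_cast
      ring

/-- A packing bound function valued at a finite set is at most its cardinality. -/
lemma PackingBoundFunction.finset_le (A : PackingBoundFunction) (d : ℕ) (hd : 0 < d)
    (S : Finset (EuclideanSpace ℝ (Fin d))) :
    A.toFun d ↑S ≤ S.card := by
  classical
  set R : ℝ := Metric.diam (↑S : Set (EuclideanSpace ℝ (Fin d))) + 2 with hR
  have hdiam : 0 ≤ Metric.diam (↑S : Set (EuclideanSpace ℝ (Fin d))) := Metric.diam_nonneg
  have hR2 : (2:ℝ) ≤ R := by simp [hR]; linarith
  have hRpos : 0 < R := by linarith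
  set v : EuclideanSpace ℝ (Fin d) := EuclideanSpace.single (⟨0, hd⟩ : Fin d) (1:ℝ) with hv
  have hvnorm : ‖v‖ = 1 := by simp [hv, EuclideanSpace.norm_single]
  set p : Fin S.card → EuclideanSpace ℝ (Fin d) := fun i => (R * (i:ℕ)) • v with hp
  have hpdist : ∀ i j : Fin S.card, i ≠ j → R ≤ dist (p i) (p j) := by
    intro i j hij
    have h1 : dist (p i) (p j) = |R * (i:ℕ) - R * (j:ℕ)| := by
      rw [hp]
      simp only [dist_eq_norm, ← sub_smul, norm_smul, hvnorm, mul_one]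
      rfl
    have hijn : ((i:ℕ):ℝ) ≠ ((j:ℕ):ℝ) := by
      exact_mod_cast fun h => hij (Fin.ext (by exact_mod_cast h))
    have h2 : (1:ℝ) ≤ |((i:ℕ):ℝ) - ((j:ℕ):ℝ)| := by
      have : ((i:ℕ):ℤ) ≠ ((j:ℕ):ℤ) := by exact_mod_cast hijn
      have h3 : (1:ℤ) ≤ |((i:ℕ):ℤ) - ((j:ℕ):ℤ)| := Int.one_le_abs (sub_ne_zero.mpr this)
      calc (1:ℝ) = ((1:ℤ):ℝ) := by norm_num
        _ ≤ |(((i:ℕ):ℤ):ℝ) - (((j:ℕ):ℤ):ℝ)| := by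
            rw [← Int.cast_sub, ← Int.cast_abs]; exact_mod_cast h3
        _ = |((i:ℕ):ℝ) - ((j:ℕ):ℝ)| := by push_cast; ring_nf
    calc R = R * 1 := (mul_one R).symm
      _ ≤ R * |((i:ℕ):ℝ) - ((j:ℕ):ℝ)| := by
          exact mul_le_mul_of_nonneg_left h2 hRpos.le
      _ = |R * (i:ℕ) - R * (j:ℕ)| := by rw [← mul_sub, abs_mul, abs_of_pos hRpos]
      _ = dist (p i) (p j) := h1.symm
  have hpinj : Function.Injective p := by
    intro i j h
    by_contra hij
    have := hpdist i j hij
    rw [h, dist_self] at this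
    linarith
  set T : Finset (EuclideanSpace ℝ (Fin d)) := Finset.image p Finset.univ with hT
  have hTcard : T.card = S.card := by
    rw [hT, Finset.card_image_of_injective _ hpinj, Finset.card_univ, Fintype.card_fin]
  have hTsep : ∀ x ∈ T, ∀ y ∈ T, x ≠ y → (2:ℝ) ≤ dist x y := by
    intro x hx y hy hxy
    rw [hT, Finset.mem_image] at hx hy
    obtain ⟨i, -, rfl⟩ := hx
    obtain ⟨j, -, rfl⟩ := hy
    have hij : i ≠ j := fun h => hxy (by rw [h])
    linarith [hpdist i j hij]
  have hTeval : A.toFun d ↑T = T.card := A.sep_eval d T hTsep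
  set ψ : EuclideanSpace ℝ (Fin d) → EuclideanSpace ℝ (Fin d) :=
    fun x => if h : x ∈ S then p (S.equivFin ⟨x, h⟩) else 0 with hψ
  have hle : A.toFun d ↑S ≤ A.toFun d ↑T := by
    refine A.lipschitz d d ↑S ↑T (S.finite_toSet.isBounded) (S.finite_toSet.measurableSet)
      (T.finite_toSet.isBounded) (T.finite_toSet.measurableSet) ⟨ψ, ?_, ?_⟩
    · intro x hx
      have hx' : x ∈ S := hx
      simp only [hψ, dif_pos hx']
      exact Finset.mem_image.mpr ⟨_, Finset.mem_univ _, rfl⟩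
    · intro x hx y hy
      have hx' : x ∈ S := hx
      have hy' : y ∈ S := hy
      by_cases hxy : x = y
      · subst hxy; simp
      · have hne : S.equivFin ⟨x, hx'⟩ ≠ S.equivFin ⟨y, hy'⟩ := by
          intro h
          exact hxy (congrArg Subtype.val (S.equivFin.injective h))
        have h1 : dist x y ≤ Metric.diam (↑S : Set (EuclideanSpace ℝ (Fin d))) :=
          Metric.dist_le_diam_of_mem (S.finite_toSet.isBounded) hx hy
        have h2 := hpdist _ _ hne
        simp only [hψ, dif_pos hx', dif_pos hy']
        linarith
  rw [← hTcard]
  calc A.toFun d ↑S ≤ A.toFun d ↑T := hle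
    _ = T.card := hTeval

/-- Scaling a thickening. -/
lemma thickening_smul_eq (d : ℕ) (r δ : ℝ) (hr : 0 < r) (hδ : 0 < δ)
    (s : Set (EuclideanSpace ℝ (Fin d))) :
    Metric.thickening δ (r • s) = r • Metric.thickening (δ / r) s := by
  ext x
  simp only [Metric.mem_thickening_iff, Set.mem_smul_set]
  constructor
  · rintro ⟨z, ⟨y, hy, rfl⟩, hdz⟩
    refine ⟨r⁻¹ • x, ⟨y, hy, ?_⟩, by
      rw [smul_smul, mul_inv_cancel₀ hr.ne', one_smul]⟩
    have : dist (r⁻¹ • x) (r⁻¹ • (r • y)) = ‖r⁻¹‖ * dist x (r • y) := dist_smul₀ _ _ _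
    rw [smul_smul, inv_mul_cancel₀ hr.ne', one_smul] at this
    rw [this, Real.norm_eq_abs, abs_of_pos (inv_pos.mpr hr)]
    rw [div_eq_inv_mul]
    exact mul_lt_mul_of_pos_left hdz (inv_pos.mpr hr)
  · rintro ⟨y, ⟨z, hz, hdz⟩, rfl⟩
    refine ⟨r • z, ⟨z, hz, rfl⟩, ?_⟩
    rw [dist_smul₀, Real.norm_eq_abs, abs_of_pos hr]
    calc r * dist y z < r * (δ / r) := mul_lt_mul_of_pos_left hdz hr
      _ = δ := by field_simp

/-- Existence of a maximal 2-separated finite subset of a bounded set. -/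
lemma exists_maximal_separated (d : ℕ) (s : Set (EuclideanSpace ℝ (Fin d)))
    (hs : IsBounded s) :
    ∃ T : Finset (EuclideanSpace ℝ (Fin d)), ↑T ⊆ s ∧
      (∀ x ∈ T, ∀ y ∈ T, x ≠ y → (2:ℝ) ≤ dist x y) ∧
      s ⊆ Metric.thickening 2 ↑T ∧
      (T.card : ℝ≥0∞) * volume (Metric.ball (0 : EuclideanSpace ℝ (Fin d)) 1)
        ≤ volume (Metric.thickening 1 s) := by
  classical
  set v : ℝ≥0∞ := volume (Metric.ball (0 : EuclideanSpace ℝ (Fin d)) 1) with hv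
  set V : ℝ≥0∞ := volume (Metric.thickening 1 s) with hVdef
  have hVfin : V < ⊤ := (hs.thickening).measure_lt_top
  -- volume bound for any separated subset
  have hcard : ∀ T : Finset (EuclideanSpace ℝ (Fin d)), ↑T ⊆ s →
      (∀ x ∈ T, ∀ y ∈ T, x ≠ y → (2:ℝ) ≤ dist x y) →
      (T.card : ℝ≥0∞) * v ≤ V := by
    intro T hTs hTsep
    have hdisj : (↑T : Set (EuclideanSpace ℝ (Fin d))).PairwiseDisjoint
        (fun t => Metric.ball t 1) := by
      intro x hx y hy hxy
      exact Metric.ball_disjoint_ball (by linarith [hTsep x hx y hy hxy] : (1:ℝ)+1 ≤ dist x y)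
    have hmeas : ∀ t ∈ T, MeasurableSet (Metric.ball t 1) :=
      fun t _ => Metric.isOpen_ball.measurableSet
    have hsum := measure_biUnion_finset hdisj hmeas (μ := volume)
    have hsub : (⋃ t ∈ T, Metric.ball t 1) ⊆ Metric.thickening 1 s := by
      intro x hx
      simp only [Set.mem_iUnion] at hx
      obtain ⟨t, ht, hxt⟩ := hx
      exact Metric.mem_thickening_iff.mpr ⟨t, hTs ht, Metric.mem_ball.mp hxt⟩
    calc (T.card : ℝ≥0∞) * v = ∑ t ∈ T, volume (Metric.ball t 1) := by
          rw [Finset.sum_congr rfl (fun t _ => Measure.addHaar_ball_center volume t 1)]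
          simp [hv, mul_comm]
      _ = volume (⋃ t ∈ T, Metric.ball t 1) := hsum.symm
      _ ≤ V := measure_mono hsub
  -- the set of cardinalities is bounded above
  obtain ⟨N, hN⟩ := ENNReal.exists_nat_gt (ne_top_of_lt (ENNReal.div_lt_top hVfin.ne
    ((Metric.measure_ball_pos volume (0 : EuclideanSpace ℝ (Fin d)) one_pos).ne')))
  have hvne : v ≠ 0 := (Metric.measure_ball_pos volume (0 : EuclideanSpace ℝ (Fin d)) one_pos).ne'
  have hvtop : v ≠ ⊤ := measure_ball_lt_top.ne
  set 𝒮 : Set ℕ := {k | ∃ T : Finset (EuclideanSpace ℝ (Fin d)), ↑T ⊆ s ∧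
      (∀ x ∈ T, ∀ y ∈ T, x ≠ y → (2:ℝ) ≤ dist x y) ∧ T.card = k} with h𝒮
  have h0 : (0:ℕ) ∈ 𝒮 := ⟨∅, by simp, by simp, rfl⟩
  have hbdd : BddAbove 𝒮 := by
    refine ⟨N, fun k hk => ?_⟩
    obtain ⟨T, hTs, hTsep, rfl⟩ := hk
    have h1 : (T.card : ℝ≥0∞) ≤ V / v :=
      (ENNReal.le_div_iff_mul_le (Or.inl hvne) (Or.inl hvtop)).mpr (hcard T hTs hTsep)
    have h2 : (T.card : ℝ≥0∞) < N := lt_of_le_of_lt h1 hN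
    exact_mod_cast h2.le
  have hmax : sSup 𝒮 ∈ 𝒮 := Nat.sSup_mem ⟨0, h0⟩ hbdd
  obtain ⟨T, hTs, hTsep, hTcard⟩ := hmax
  refine ⟨T, hTs, hTsep, ?_, hcard T hTs hTsep⟩
  intro x hx
  by_contra hxT
  have hfar : ∀ t ∈ T, (2:ℝ) ≤ dist x t := by
    intro t ht
    by_contra h
    exact hxT (Metric.mem_thickening_iff.mpr ⟨t, ht, by linarith⟩)
  have hxnotT : x ∉ T := by
    intro h
    have h2 := hfar x h
    rw [dist_self] at h2
    linarith
  have hnew : T.card + 1 ∈ 𝒮 := by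
    refine ⟨insert x T, ?_, ?_, ?_⟩
    · rw [Finset.coe_insert]
      exact Set.insert_subset hx hTs
    · intro a ha b hb hab
      rcases Finset.mem_insert.mp ha with rfl | ha'
      · rcases Finset.mem_insert.mp hb with rfl | hb'
        · exact absurd rfl hab
        · exact hfar b hb'
      · rcases Finset.mem_insert.mp hb with rfl | hb'
        · rw [dist_comm]; exact hfar a ha'
        · exact hTsep a ha' b hb' hab
    · rw [Finset.card_insert_of_notMem hxnotT]
  have := le_csSup hbdd hnew
  rw [hTcard] at this
  omega

/-- Volume of a ball of radius ε in dimension m. -/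
lemma vol_ball_eq (m : ℕ) (ε : ℝ) (hε : 0 < ε) :
    volume (Metric.ball (0 : EuclideanSpace ℝ (Fin m)) ε)
      = ENNReal.ofReal (ε ^ m) * volume (Metric.ball (0 : EuclideanSpace ℝ (Fin m)) 1) := by
  rcases Nat.eq_zero_or_pos m with hm | hm
  · subst hm
    haveI : Subsingleton (EuclideanSpace ℝ (Fin 0)) :=
      ⟨fun a b => PiLp.ext fun i => i.elim0⟩
    have hball : ∀ δ : ℝ, 0 < δ →
        Metric.ball (0 : EuclideanSpace ℝ (Fin 0)) δ = Set.univ := by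
      intro δ hδ
      ext x
      simp [Metric.mem_ball, Subsingleton.elim x 0, hδ]
    rw [hball ε hε, hball 1 one_pos]
    simp
  · haveI : Nontrivial (EuclideanSpace ℝ (Fin m)) := by
      refine ⟨0, EuclideanSpace.single (⟨0, hm⟩ : Fin m) (1:ℝ), fun h => ?_⟩
      have := congrArg norm h
      simp [EuclideanSpace.norm_single] at this
    rw [Measure.addHaar_ball volume 0 hε.le, finrank_euclideanSpace_fin]
/-- If `C ⊆ ℝ^d` is a bounded Borel set with finite upper `n`-dimensional
Minkowski content, then `limsup_{r → ∞} A(rC)/r^n < ∞`, i.e., `r ↦ A(rC)/r^n` is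
eventually bounded above. -/
theorem packingBoundFunction_limsup_finite (A : PackingBoundFunction) (n d : ℕ)
    (hn : 1 ≤ n) (hnd : n ≤ d)
    (C : Set (EuclideanSpace ℝ (Fin d))) (hCb : IsBounded C) (hCm : MeasurableSet C)
    (hfin : Filter.limsup (fun ε : ℝ =>
        volume (Metric.thickening ε C) /
          volume (Metric.ball (0 : EuclideanSpace ℝ (Fin (d - n))) ε))
      (nhdsWithin 0 (Set.Ioi 0)) ≠ ⊤) :
    Filter.IsBoundedUnder (· ≤ ·) Filter.atTop
      (fun r : ℝ => A.toFun d (r • C) / r ^ n) := by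
  classical
  have hd : 0 < d := lt_of_lt_of_le hn hnd
  set m : ℕ := d - n with hm
  set cm : ℝ≥0∞ := volume (Metric.ball (0 : EuclideanSpace ℝ (Fin m)) 1) with hcm
  have hcmtop : cm ≠ ⊤ := measure_ball_lt_top.ne
  set v : ℝ≥0∞ := volume (Metric.ball (0 : EuclideanSpace ℝ (Fin d)) 1) with hvdef
  have hv0 : v ≠ 0 := (Metric.measure_ball_pos volume _ one_pos).ne'
  have hvtop : v ≠ ⊤ := measure_ball_lt_top.ne
  set L : ℝ≥0∞ := Filter.limsup (fun ε : ℝ =>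
      volume (Metric.thickening ε C) /
        volume (Metric.ball (0 : EuclideanSpace ℝ (Fin (d - n))) ε))
      (nhdsWithin 0 (Set.Ioi 0)) with hL
  have hK : L < L + 1 := ENNReal.lt_add_right hfin one_ne_zero
  have hev : ∀ᶠ ε in nhdsWithin (0:ℝ) (Set.Ioi 0),
      volume (Metric.thickening ε C) /
        volume (Metric.ball (0 : EuclideanSpace ℝ (Fin (d - n))) ε) < L + 1 :=
    Filter.eventually_lt_of_limsup_lt hK
  rw [eventually_nhdsWithin_iff, Metric.eventually_nhds_iff] at hev
  obtain ⟨δ, hδ, hδP⟩ := hev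
  have hvol : ∀ ε : ℝ, 0 < ε → ε < δ →
      volume (Metric.thickening ε C) ≤ (L + 1) * (ENNReal.ofReal (ε ^ m) * cm) := by
    intro ε hε hεδ
    have h1 : dist ε (0:ℝ) < δ := by
      rw [Real.dist_eq, sub_zero, abs_of_pos hε]; exact hεδ
    have h2 := hδP h1 hε
    have hb0 : volume (Metric.ball (0 : EuclideanSpace ℝ (Fin (d - n))) ε) ≠ 0 :=
      (Metric.measure_ball_pos volume _ hε).ne'
    have hbtop : volume (Metric.ball (0 : EuclideanSpace ℝ (Fin (d - n))) ε) ≠ ⊤ :=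
      measure_ball_lt_top.ne
    have h3 := (ENNReal.div_lt_iff (Or.inl hb0) (Or.inl hbtop)).mp h2
    have h4 : volume (Metric.ball (0 : EuclideanSpace ℝ (Fin (d - n))) ε)
        = ENNReal.ofReal (ε ^ m) * cm := by
      rw [hcm, hm]
      exact vol_ball_eq (d - n) ε hε
    rw [h4] at h3
    exact h3.le
  set c0 : ℝ := ((L + 1) * cm).toReal with hc0
  set M : ℝ := c0 / v.toReal * 3 ^ n with hM
  refine isBoundedUnder_of_eventually_le (a := M) ?_
  have hvpos : 0 < v.toReal := ENNReal.toReal_pos hv0 hvtop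
  filter_upwards [Filter.eventually_ge_atTop (max 1 (1 / (3 * δ)) + 1)] with r hr
  have hr1 : (1:ℝ) ≤ r := by
    have := le_max_left (1:ℝ) (1 / (3 * δ)); linarith
  have hrpos : 0 < r := by linarith
  have h3r : 0 < 3 * r := by linarith
  have hrδ : 1 / (3 * δ) < r := by
    have := le_max_right (1:ℝ) (1 / (3 * δ)); linarith
  have hεδ : 1 / (3 * r) < δ := by
    rw [div_lt_iff₀ (by positivity : (0:ℝ) < 3 * δ)] at hrδ
    rw [div_lt_iff₀ h3r]
    nlinarith
  have hεpos : 0 < 1 / (3 * r) := by positivity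
  -- the scaled set and its maximal separated subset
  set s : Set (EuclideanSpace ℝ (Fin d)) := (3 * r) • C with hsdef
  have hsb : IsBounded s := hCb.smul₀ (3 * r)
  have hsm : MeasurableSet s := hCm.const_smul₀ (3 * r)
  obtain ⟨T, hTs, hTsep, hTcover, hTvol⟩ := exists_maximal_separated d s hsb
  -- A (r • C) ≤ T.card
  have hmesh := A.mesh 2 two_pos d s ↑T hsb hsm
    (T.finite_toSet.isBounded) (T.finite_toSet.measurableSet) hTcover
  have hsmul : ((1:ℝ) / (1 + 2)) • s = r • C := by
    rw [hsdef, smul_smul, show (1:ℝ) / (1 + 2) * (3 * r) = r by ring]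
  rw [hsmul] at hmesh
  have hA1 : A.toFun d (r • C) ≤ (T.card : ℝ) :=
    le_trans hmesh (A.finset_le d hd T)
  -- volume chain
  have hthick : Metric.thickening 1 s = (3 * r) • Metric.thickening (1 / (3 * r)) C := by
    rw [hsdef]
    exact thickening_smul_eq d (3 * r) 1 h3r one_pos C
  have hV : volume (Metric.thickening 1 s)
      = ENNReal.ofReal ((3 * r) ^ d) * volume (Metric.thickening (1 / (3 * r)) C) := by
    rw [hthick, Measure.addHaar_smul volume, finrank_euclideanSpace_fin,
      abs_of_pos (pow_pos h3r d)]
  have hpowid : (3 * r) ^ d * (1 / (3 * r)) ^ m = (3 * r) ^ n := by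
    have h1 : (3 * r) ^ d = (3 * r) ^ n * (3 * r) ^ m := by
      rw [← pow_add, hm, Nat.add_sub_cancel' hnd]
    rw [h1, one_div, inv_pow, mul_assoc, mul_inv_cancel₀ (pow_ne_zero m h3r.ne'), mul_one]
  have hchain : (T.card : ℝ≥0∞) * v ≤ ((L + 1) * cm) * ENNReal.ofReal ((3 * r) ^ n) := by
    calc (T.card : ℝ≥0∞) * v ≤ volume (Metric.thickening 1 s) := hTvol
      _ = ENNReal.ofReal ((3 * r) ^ d) * volume (Metric.thickening (1 / (3 * r)) C) := hV
      _ ≤ ENNReal.ofReal ((3 * r) ^ d) * ((L + 1) * (ENNReal.ofReal ((1 / (3 * r)) ^ m) * cm)) :=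
          mul_le_mul_right (hvol (1 / (3 * r)) hεpos hεδ) _
      _ = ((L + 1) * cm) * (ENNReal.ofReal ((3 * r) ^ d) * ENNReal.ofReal ((1 / (3 * r)) ^ m)) := by
          ring
      _ = ((L + 1) * cm) * ENNReal.ofReal ((3 * r) ^ n) := by
          rw [← ENNReal.ofReal_mul (pow_nonneg h3r.le d), hpowid]
  have hL1top : (L + 1) ≠ ⊤ := ENNReal.add_ne_top.mpr ⟨hfin, ENNReal.one_ne_top⟩
  have hBtop : ((L + 1) * cm) * ENNReal.ofReal ((3 * r) ^ n) ≠ ⊤ :=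
    ENNReal.mul_ne_top (ENNReal.mul_ne_top hL1top hcmtop) ENNReal.ofReal_ne_top
  have hreal := ENNReal.toReal_mono hBtop hchain
  rw [ENNReal.toReal_mul, ENNReal.toReal_mul, ENNReal.toReal_natCast,
    ENNReal.toReal_ofReal (pow_nonneg h3r.le n)] at hreal
  -- hreal : T.card * v.toReal ≤ ((L+1)*cm).toReal * (3*r)^n
  have hcard_le : (T.card : ℝ) ≤ M * r ^ n := by
    have h1 : (T.card : ℝ) ≤ c0 * (3 * r) ^ n / v.toReal := by
      rw [le_div_iff₀ hvpos]
      exact hreal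
    have h2 : c0 * (3 * r) ^ n / v.toReal = M * r ^ n := by
      rw [hM, mul_pow]
      field_simp
    linarith [h1, h2.le]
  rw [div_le_iff₀ (pow_pos hrpos n)]
  calc A.toFun d (r • C) ≤ (T.card : ℝ) := hA1
    _ ≤ M * r ^ n := hcard_le
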